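/- For every compact set K ⊆ {t ∈ ℂ : Re(t) > 0} there exists a constant C > 0 such that for every integer n ≥ 1 and every t ∈ K: |χ(nt) − χ((n+1)t)| ≤ C/n. -/

import Mathlib

open Complex Set Filter MeasureTheory

/-- `μ = (R - √(R²-4))/2`. -/
noncomputable def mu (R : ℝ) : ℝ := (R - Real.sqrt (R ^ 2 - 4)) / 2

/-- The Möbius transformation `λ(z) = (z - μ)/(μz - 1)`. -/
noncomputable def lam (R : ℝ) (z : ℂ) : ℂ := (z - (mu R : ℂ)) / ((mu R : ℂ) * z - 1)

/-- The shifted Zhukovsky-type map `ψ(w) = Rw - 1 + 1/(Rw - 1)`. -/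
noncomputable def psi (R : ℝ) (w : ℂ) : ℂ := (R : ℂ) * w - 1 + ((R : ℂ) * w - 1)⁻¹

/-- `χ(t) = t ∑_{k ∈ ℤ} μ^{4k} exp((μ - 1/μ) μ^{4k} t)`. -/
noncomputable def chi (R : ℝ) (t : ℂ) : ℂ :=
  t * ∑' k : ℤ, (mu R : ℂ) ^ (4 * k) *
    Complex.exp (((mu R : ℂ) - (mu R : ℂ)⁻¹) * (mu R : ℂ) ^ (4 * k) * t)

/-- The region `D = {t : |t - 1/R| < 1/R, Re t > Rμ²/2}`. -/
def Dset (R : ℝ) : Set ℂ :=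
  {t | ‖t - 1 / (R : ℂ)‖ < 1 / R ∧ R * (mu R) ^ 2 / 2 < t.re}

/-- The region `𝔇 = {w : |w - R/(R²-1)| > 1/(R²-1), |w| < 1}`. -/
def frakD (R : ℝ) : Set ℂ :=
  {w | 1 / (R ^ 2 - 1) < ‖w - (R : ℂ) / (((R : ℝ) ^ 2 - 1 : ℝ) : ℂ)‖ ∧
    ‖w‖ < 1}

/-- The orthogonality domain `G₁ = ψ(𝔇)`. -/
noncomputable def G1 (R : ℝ) : Set ℂ := psi R '' frakD R

/-- `p` is the sequence of Carleman (Bergman) orthonormal polynomials of `G₁`: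
`p n` has degree `n`, real positive leading coefficient, and
`(1/π) ∫_{G₁} pₙ conj(pₘ) dA = δ_{n,m}`. -/
def IsCarleman (R : ℝ) (p : ℕ → Polynomial ℂ) : Prop :=
  (∀ n, (p n).natDegree = n) ∧
  (∀ n, 0 < (p n).leadingCoeff.re ∧ (p n).leadingCoeff.im = 0) ∧
  (∀ n m, ∫ z in G1 R, (p n).eval z * (starRingEnd ℂ) ((p m).eval z) =
      if n = m then (Real.pi : ℂ) else 0)

/-- The limit functions `f_q` of Theorem 1.1. -/
noncomputable def fq (R q : ℝ) (t : ℂ) : ℂ :=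
  (1 - (mu R : ℂ) * t) ^ 2 * (1 - (mu R : ℂ) ^ 3 / t) ^ 2 / ((1 - (mu R : ℂ) ^ 4) * R) *
    ((chi R ((((mu R) ^ (4 * q) : ℝ) : ℂ) * t) -
        chi R ((((mu R) ^ (4 * q + 2) : ℝ) : ℂ) / t)) /
      (t - (mu R : ℂ) ^ 2 / t))

/-- `Gₙ(t) = μ^{-n} λ(t)ⁿ λ'(t)`. -/
noncomputable def Gfun (R : ℝ) (n : ℕ) (t : ℂ) : ℂ :=
  ((mu R : ℂ) ^ n)⁻¹ * (lam R t) ^ n * deriv (lam R) t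



/-- two-sided geometric series is summable -/
lemma summable_geom_int {m : ℝ} (hm0 : 0 ≤ m) (hm1 : m < 1) :
    Summable (fun k : ℤ => m ^ k.natAbs) := by
  apply Summable.of_nat_of_neg_add_one
  · simpa using summable_geometric_of_lt_one hm0 hm1
  · have : Summable (fun n : ℕ => m ^ n * m) := (summable_geometric_of_lt_one hm0 hm1).mul_right m
    apply this.congr
    intro n
    have h : ((-((n:ℤ) + 1))).natAbs = n + 1 := by omega
    rw [h, pow_succ]

lemma exists_k0 {m q : ℝ} (hm0 : 0 < m) (hm1 : m < 1) (hq : 0 < q) :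
    ∃ k0 : ℤ, m ≤ q * m ^ k0 ∧ q * m ^ k0 ≤ 1 := by
  obtain ⟨n, h1, h2⟩ := exists_mem_Ico_zpow hq (one_lt_inv_iff₀.mpr ⟨hm0, hm1⟩)
  refine ⟨n + 1, ?_, ?_⟩
  · have h1' : (m ^ n)⁻¹ ≤ q := by rwa [inv_zpow] at h1
    have hz : (0:ℝ) < m ^ n := zpow_pos hm0 n
    have : 1 ≤ q * m ^ n := by
      rw [← inv_mul_cancel₀ hz.ne']
      exact mul_le_mul_of_nonneg_right h1' hz.le
    calc m = 1 * m := (one_mul m).symm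
      _ ≤ q * m ^ n * m := by nlinarith
      _ = q * m ^ (n + 1) := by rw [zpow_add_one₀ hm0.ne', mul_assoc]
  · have h2' : q < (m ^ (n+1))⁻¹ := by rwa [inv_zpow] at h2
    have hz : (0:ℝ) < m ^ (n+1) := zpow_pos hm0 _
    have := mul_lt_mul_of_pos_right h2' hz
    rw [inv_mul_cancel₀ hz.ne'] at this
    exact this.le

lemma min_le_geom {m s : ℝ} (hm0 : 0 < m) (hm1 : m < 1) (hs1 : m ≤ s) (hs2 : s ≤ 1) (j : ℤ) :
    min (s * m ^ j) (s * m ^ j)⁻¹ ≤ m⁻¹ * m ^ j.natAbs := by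
  have hs0 : 0 < s := lt_of_lt_of_le hm0 hs1
  have hminv : 1 ≤ m⁻¹ := one_le_inv_iff₀.mpr ⟨hm0, hm1.le⟩
  rcases le_or_gt 0 j with hj | hj
  · have hja : (m : ℝ) ^ j = m ^ j.natAbs := by
      rw [← zpow_natCast m j.natAbs, Int.natAbs_of_nonneg hj]
    calc min (s * m ^ j) (s * m ^ j)⁻¹ ≤ s * m ^ j := min_le_left _ _
      _ ≤ 1 * m ^ j := by
          have := zpow_pos hm0 j
          nlinarith
      _ = m ^ j.natAbs := by rw [one_mul, hja]
      _ ≤ m⁻¹ * m ^ j.natAbs := by nlinarith [pow_pos hm0 j.natAbs]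
  · have hja : ((m : ℝ) ^ j)⁻¹ = m ^ j.natAbs := by
      rw [← zpow_natCast m j.natAbs, ← zpow_neg]
      congr 1
      omega
    calc min (s * m ^ j) (s * m ^ j)⁻¹ ≤ (s * m ^ j)⁻¹ := min_le_right _ _
      _ = s⁻¹ * (m ^ j)⁻¹ := by rw [mul_inv]
      _ ≤ m⁻¹ * (m ^ j)⁻¹ := by
          gcongr
      _ = m⁻¹ * m ^ j.natAbs := by rw [hja]



/-- `x e^{-εx} ≤ (4/ε²)/x` -/
lemma aux_xexp {ε x : ℝ} (hε : 0 < ε) (hx : 0 < x) :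
    x * Real.exp (-(ε * x)) ≤ 4 / ε ^ 2 * x⁻¹ := by
  have h1 : ε * x / 2 + 1 ≤ Real.exp (ε * x / 2) := Real.add_one_le_exp _
  have h2 : (ε * x) ^ 2 / 4 ≤ Real.exp (ε * x) := by
    have ha : (0:ℝ) ≤ ε * x / 2 + 1 := by positivity
    calc (ε * x) ^ 2 / 4 = (ε * x / 2) ^ 2 := by ring
      _ ≤ (ε * x / 2 + 1) ^ 2 := by nlinarith
      _ ≤ Real.exp (ε * x / 2) ^ 2 := pow_le_pow_left₀ ha h1 2
      _ = Real.exp (ε * x) := by rw [sq, ← Real.exp_add]; ring_nf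
  have hexp : Real.exp (-(ε * x)) ≤ 4 / (ε * x) ^ 2 := by
    rw [Real.exp_neg]
    calc (Real.exp (ε * x))⁻¹ ≤ ((ε * x) ^ 2 / 4)⁻¹ :=
          inv_anti₀ (by positivity) h2
      _ = 4 / (ε * x) ^ 2 := by rw [inv_div]
  calc x * Real.exp (-(ε * x)) ≤ x * (4 / (ε * x) ^ 2) := by nlinarith
    _ = 4 / ε ^ 2 * x⁻¹ := by field_simp

/-- `(r+4r²)e^{-δr} ≤ B min(r, 1/r)` -/
lemma phi_le {δ r : ℝ} (hδ : 0 < δ) (hr : 0 ≤ r) :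
    Real.exp (-(δ * r)) * (r + 4 * r ^ 2) ≤ (5 + 1280 / δ ^ 4) * min r r⁻¹ := by
  have hB : (0:ℝ) < 1280 / δ ^ 4 := by positivity
  rcases eq_or_lt_of_le hr with h0 | hr0
  · simp [← h0]
  rcases le_or_gt r 1 with h1 | h1
  · have hinv : (1:ℝ) ≤ r⁻¹ := one_le_inv_iff₀.mpr ⟨hr0, h1⟩
    have hmin : min r r⁻¹ = r := min_eq_left (h1.trans hinv)
    have hexp : Real.exp (-(δ * r)) ≤ 1 := Real.exp_le_one_iff.mpr (by nlinarith)
    rw [hmin]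
    have h5 : r + 4 * r ^ 2 ≤ 5 * r := by nlinarith
    have hpos : (0:ℝ) ≤ r + 4 * r ^ 2 := by positivity
    nlinarith [Real.exp_nonneg (-(δ * r))]
  · have hinv : r⁻¹ ≤ 1 := inv_le_one_of_one_le₀ h1.le
    have hinv0 : (0:ℝ) < r⁻¹ := by positivity
    have hmin : min r r⁻¹ = r⁻¹ := min_eq_right (hinv.trans h1.le)
    have hq1 : δ * r / 4 + 1 ≤ Real.exp (δ * r / 4) := Real.add_one_le_exp _
    have h4 : (δ * r / 4) ^ 4 ≤ Real.exp (δ * r) := by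
      have ha : (0:ℝ) ≤ δ * r / 4 + 1 := by positivity
      have hb : (0:ℝ) ≤ δ * r / 4 := by positivity
      calc (δ * r / 4) ^ 4 ≤ (δ * r / 4 + 1) ^ 4 :=
            pow_le_pow_left₀ hb (by linarith) 4
        _ ≤ Real.exp (δ * r / 4) ^ 4 := pow_le_pow_left₀ ha hq1 4
        _ = Real.exp (δ * r) := by
            rw [← Real.exp_nat_mul]; congr 1; ring
    have hexp : Real.exp (-(δ * r)) ≤ 256 / (δ * r) ^ 4 := by
      rw [Real.exp_neg]
      calc (Real.exp (δ * r))⁻¹ ≤ ((δ * r / 4) ^ 4)⁻¹ :=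
            inv_anti₀ (by positivity) h4
        _ = 256 / (δ * r) ^ 4 := by
            rw [div_pow]; rw [inv_div]; norm_num
    rw [hmin]
    have h5 : r + 4 * r ^ 2 ≤ 5 * r ^ 2 := by nlinarith
    have hpos : (0:ℝ) ≤ r + 4 * r ^ 2 := by positivity
    calc Real.exp (-(δ * r)) * (r + 4 * r ^ 2)
        ≤ (256 / (δ * r) ^ 4) * (5 * r ^ 2) := by
          apply mul_le_mul hexp h5 hpos (by positivity)
      _ = 1280 / δ ^ 4 * (r⁻¹ * r⁻¹) := by
          field_simp; ring
      _ ≤ 1280 / δ ^ 4 * r⁻¹ :=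
          mul_le_mul_of_nonneg_left (by nlinarith) hB.le
      _ ≤ (5 + 1280 / δ ^ 4) * r⁻¹ := by nlinarith

/-- key complex estimate -/
lemma key_est (a : ℂ) (ha : 0 ≤ a.re) (n : ℕ) (hn : 1 ≤ n) :
    ‖(n:ℂ) * a * Complex.exp (-((n:ℂ) * a))
      - ((n:ℂ) + 1) * a * Complex.exp (-(((n:ℂ) + 1) * a))‖
    ≤ Real.exp (-(n * a.re)) * (n * ‖a‖ + 4 * (n * ‖a‖) ^ 2) / n := by
  have hn0 : (0:ℝ) < n := by exact_mod_cast hn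
  have hn1 : (1:ℝ) ≤ n := by exact_mod_cast hn
  set z : ℂ := (n:ℂ) * a with hz
  have hw : ((n:ℂ) + 1) * a = z + a := by rw [hz]; ring
  have hid : z * Complex.exp (-z) - (z + a) * Complex.exp (-(z + a))
      = Complex.exp (-z) * (-a + (z + a) * (1 - Complex.exp (-a))) := by
    rw [show (-(z+a) : ℂ) = -z + -a by ring, Complex.exp_add]
    ring
  have habs1 : ‖1 - Complex.exp (-a)‖ ≤ 2 * ‖a‖ := by
    rcases le_or_gt (‖a‖) 1 with h | h
    · have := Complex.norm_exp_sub_one_le (x := -a) (by simpa using h)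
      calc ‖1 - Complex.exp (-a)‖ = ‖Complex.exp (-a) - 1‖ := by
            rw [← norm_neg]; ring_nf
        _ ≤ 2 * ‖-a‖ := this
        _ = 2 * ‖a‖ := by rw [norm_neg]
    · have he : ‖Complex.exp (-a)‖ ≤ 1 := by
        rw [Complex.norm_exp]
        apply Real.exp_le_one_iff.mpr
        simpa using ha
      calc ‖1 - Complex.exp (-a)‖
          ≤ ‖(1:ℂ)‖ + ‖Complex.exp (-a)‖ := by
            simpa using norm_sub_le 1 (Complex.exp (-a))
        _ ≤ 2 := by simp; linarith
        _ ≤ 2 * ‖a‖ := by nlinarith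
  have hza : ‖z‖ = n * ‖a‖ := by
    rw [hz, norm_mul]; simp
  have hwabs : ‖z + a‖ ≤ 2 * (n * ‖a‖) := by
    calc ‖z + a‖ ≤ ‖z‖ + ‖a‖ := norm_add_le _ _
      _ ≤ n * ‖a‖ + n * ‖a‖ := by
          rw [hza]
          have : ‖a‖ ≤ n * ‖a‖ := by
            nlinarith [norm_nonneg a, hn1]
          linarith
      _ = 2 * (n * ‖a‖) := by ring
  have hez : ‖Complex.exp (-z)‖ = Real.exp (-(n * a.re)) := by
    rw [Complex.norm_exp]
    congr 1
    rw [hz]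
    simp [Complex.mul_re]
  rw [hw, hid, norm_mul, hez]
  rw [div_eq_mul_inv, mul_assoc]  -- RHS = exp * ((...) * n⁻¹)
  apply mul_le_mul_of_nonneg_left _ (Real.exp_nonneg _)
  calc ‖-a + (z + a) * (1 - Complex.exp (-a))‖
      ≤ ‖a‖ + ‖z + a‖ * ‖1 - Complex.exp (-a)‖ := by
        refine (norm_add_le _ _).trans ?_
        rw [norm_neg, norm_mul]
    _ ≤ ‖a‖ + (2 * (n * ‖a‖)) * (2 * ‖a‖) := by
        have h2 : (0:ℝ) ≤ ‖z + a‖ := norm_nonneg _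
        have := mul_le_mul hwabs habs1 (norm_nonneg _) (by positivity)
        linarith
    _ = (n * ‖a‖ + 4 * (n * ‖a‖) ^ 2) * (n:ℝ)⁻¹ := by
        field_simp
        ring



lemma mu_pos {R : ℝ} (hR : 2 < R) : 0 < mu R := by
  have h4 : (0:ℝ) ≤ R ^ 2 - 4 := by nlinarith
  have : Real.sqrt (R ^ 2 - 4) < R := (Real.sqrt_lt' (by linarith)).mpr (by nlinarith)
  unfold mu; linarith

lemma mu_lt_one {R : ℝ} (hR : 2 < R) : mu R < 1 := by
  have h4 : (0:ℝ) ≤ R ^ 2 - 4 := by nlinarith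
  have : R - 2 < Real.sqrt (R ^ 2 - 4) := (Real.lt_sqrt (by linarith)).mpr (by nlinarith)
  unfold mu; linarith

lemma hpow_eq {R : ℝ} (hR : 2 < R) (k : ℤ) :
    ((mu R : ℂ)) ^ (4 * k) = (((mu R ^ 4 : ℝ) ^ k : ℝ) : ℂ) := by
  calc ((mu R : ℂ)) ^ (4 * k) = (((mu R : ℂ)) ^ (4:ℤ)) ^ k := zpow_mul _ 4 k
    _ = (((mu R ^ 4 : ℝ)) : ℂ) ^ k := by norm_cast
    _ = (((mu R ^ 4 : ℝ) ^ k : ℝ) : ℂ) := (Complex.ofReal_zpow _ _).symm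

lemma summable_chi_term {R : ℝ} (hR : 2 < R) {s : ℂ} (hs : 0 < s.re) :
    Summable (fun k : ℤ => s * ((mu R : ℂ) ^ (4 * k) *
      Complex.exp (((mu R : ℂ) - (mu R : ℂ)⁻¹) * (mu R : ℂ) ^ (4 * k) * s))) := by
  have hμ0 := mu_pos hR
  have hμ1 := mu_lt_one hR
  set m : ℝ := mu R ^ 4 with hm
  have hm0 : 0 < m := by positivity
  have hm1 : m < 1 := by
    rw [hm]; exact pow_lt_one₀ hμ0.le hμ1 (by norm_num)
  set c : ℝ := (mu R)⁻¹ - mu R with hc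
  have hc0 : 0 < c := by
    rw [hc]; have : 1 < (mu R)⁻¹ := one_lt_inv_iff₀.mpr ⟨hμ0, hμ1⟩; linarith
  set ε : ℝ := c * s.re with hε
  have hε0 : 0 < ε := by positivity
  have habs : ∀ k : ℤ, ‖s * ((mu R : ℂ) ^ (4 * k) *
      Complex.exp (((mu R : ℂ) - (mu R : ℂ)⁻¹) * (mu R : ℂ) ^ (4 * k) * s))‖
      = ‖s‖ * (m ^ k * Real.exp (-(ε * m ^ k))) := by
    intro k
    rw [norm_mul, norm_mul, hpow_eq hR k, Complex.norm_real, Real.norm_eq_abs, Complex.norm_exp]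
    have h1 : |m ^ k| = m ^ k := abs_of_pos (zpow_pos hm0 k)
    have h2 : ((((mu R : ℂ)) - ((mu R : ℂ))⁻¹) * ((m ^ k : ℝ) : ℂ) * s).re
        = -(ε * m ^ k) := by
      have : ((mu R : ℂ)) - ((mu R : ℂ))⁻¹ = (((mu R - (mu R)⁻¹ : ℝ)) : ℂ) := by
        push_cast; ring
      rw [this, ← Complex.ofReal_mul, Complex.re_ofReal_mul, hε, hc]
      ring
    rw [h1, h2]
  apply Summable.of_norm_bounded
    (g := fun k : ℤ => (‖s‖ * (1 + 4 / ε ^ 2 * m⁻¹)) * m ^ k.natAbs)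
    (((summable_geom_int hm0.le hm1)).mul_left _)
  intro k
  rw [habs k]
  have hsa : 0 ≤ ‖s‖ := norm_nonneg s
  have hfac : (0:ℝ) ≤ 4 / ε ^ 2 * m⁻¹ := by positivity
  have hgeo : (0:ℝ) < m ^ k.natAbs := pow_pos hm0 _
  rcases le_or_gt 0 k with hk | hk
  · have hkk : (m : ℝ) ^ k = m ^ k.natAbs := by
      rw [← zpow_natCast m k.natAbs, Int.natAbs_of_nonneg hk]
    have hexp : Real.exp (-(ε * m ^ k)) ≤ 1 :=
      Real.exp_le_one_iff.mpr (by nlinarith [zpow_pos hm0 k])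
    calc ‖s‖ * (m ^ k * Real.exp (-(ε * m ^ k)))
        ≤ ‖s‖ * (m ^ k.natAbs * 1) := by
          rw [← hkk]
          apply mul_le_mul_of_nonneg_left _ hsa
          exact mul_le_mul_of_nonneg_left hexp (zpow_pos hm0 k).le
      _ ≤ (‖s‖ * (1 + 4 / ε ^ 2 * m⁻¹)) * m ^ k.natAbs := by
          nlinarith [mul_nonneg (mul_nonneg hsa hfac) hgeo.le]
  · have hkk : ((m : ℝ) ^ k)⁻¹ = m ^ k.natAbs := by
      rw [← zpow_natCast m k.natAbs, ← zpow_neg]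
      congr 1; omega
    have := aux_xexp hε0 (zpow_pos hm0 k)
    calc ‖s‖ * (m ^ k * Real.exp (-(ε * m ^ k)))
        ≤ ‖s‖ * (4 / ε ^ 2 * (m ^ k)⁻¹) := mul_le_mul_of_nonneg_left this hsa
      _ = ‖s‖ * (4 / ε ^ 2) * m ^ k.natAbs := by rw [hkk]; ring
      _ ≤ (‖s‖ * (1 + 4 / ε ^ 2 * m⁻¹)) * m ^ k.natAbs := by
          have hminv : 1 ≤ m⁻¹ := one_le_inv_iff₀.mpr ⟨hm0, hm1.le⟩
          have h42 : (0:ℝ) ≤ 4 / ε ^ 2 := by positivity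
          apply mul_le_mul_of_nonneg_right _ hgeo.le
          nlinarith [mul_le_mul_of_nonneg_left (le_mul_of_one_le_right h42 hminv) hsa]


/-- Estimate (3.9): `χ(nt) - χ((n+1)t) = O(1/n)` locally uniformly on `Re t > 0`. -/
theorem stmt_17 (R : ℝ) (hR : 2 < R) (K : Set ℂ)
    (hK : K ⊆ {t : ℂ | 0 < t.re}) (hKc : IsCompact K) :
    ∃ C > (0 : ℝ), ∀ n : ℕ, 1 ≤ n → ∀ t ∈ K,
      ‖chi R ((n : ℂ) * t) - chi R (((n : ℂ) + 1) * t)‖ ≤ C / n := by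
  rcases K.eq_empty_or_nonempty with hKe | hKne
  · exact ⟨1, one_pos, by simp [hKe]⟩
  have hμ0 := mu_pos hR
  have hμ1 := mu_lt_one hR
  set m : ℝ := mu R ^ 4 with hm
  have hm0 : 0 < m := by positivity
  have hm1 : m < 1 := by rw [hm]; exact pow_lt_one₀ hμ0.le hμ1 (by norm_num)
  set c : ℝ := (mu R)⁻¹ - mu R with hc
  have hc0 : 0 < c := by
    rw [hc]; have : 1 < (mu R)⁻¹ := one_lt_inv_iff₀.mpr ⟨hμ0, hμ1⟩; linarith
  -- compactness constants
  obtain ⟨t₀, ht₀K, ht₀min⟩ := hKc.exists_isMinOn hKne Complex.continuous_re.continuousOn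
  obtain ⟨t₁, ht₁K, ht₁max⟩ := hKc.exists_isMaxOn hKne continuous_norm.continuousOn
  set ε : ℝ := t₀.re with hεdef
  have hε0 : 0 < ε := hK ht₀K
  have hεle : ∀ t ∈ K, ε ≤ t.re := fun t ht => ht₀min ht
  set T : ℝ := ‖t₁‖ with hTdef
  have hTle : ∀ t ∈ K, ‖t‖ ≤ T := fun t ht => ht₁max ht
  have hT0 : 0 < T := by
    have h1 : t₀ ≠ 0 := by
      intro h
      rw [hεdef, h] at hε0
      simp at hε0
    exact lt_of_lt_of_le (norm_pos_iff.mpr h1) (hTle t₀ ht₀K)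
  set δ : ℝ := ε / T with hδdef
  have hδ0 : 0 < δ := by positivity
  have hδt : ∀ t ∈ K, δ * ‖t‖ ≤ t.re := by
    intro t ht
    calc δ * ‖t‖ ≤ δ * T := mul_le_mul_of_nonneg_left (hTle t ht) hδ0.le
      _ = ε := by rw [hδdef]; exact div_mul_cancel₀ ε hT0.ne'
      _ ≤ t.re := hεle t ht
  set B : ℝ := 5 + 1280 / δ ^ 4 with hBdef
  have hB0 : 0 < B := by positivity
  set S : ℝ := ∑' k : ℤ, m ^ k.natAbs with hSdef
  have hS0 : 0 ≤ S := tsum_nonneg (fun k => (pow_pos hm0 _).le)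
  refine ⟨B * S / (c * m) + 1, by positivity, ?_⟩
  intro n hn t htK
  have ht : 0 < t.re := hK htK
  have hn0 : (0:ℝ) < n := by exact_mod_cast hn
  have htabs : 0 < ‖t‖ := by
    have h1 : t ≠ 0 := fun h => by simp [h] at ht
    exact norm_pos_iff.mpr h1
  set q : ℝ := n * (c * ‖t‖) with hqdef
  have hq0 : 0 < q := by positivity
  obtain ⟨k0, hk01, hk02⟩ := exists_k0 hm0 hm1 hq0
  -- the series terms
  set G : ℕ → ℤ → ℂ := fun N k => ((N:ℂ) * t) * ((mu R : ℂ) ^ (4 * k) *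
      Complex.exp (((mu R : ℂ) - (mu R : ℂ)⁻¹) * (mu R : ℂ) ^ (4 * k) * ((N:ℂ) * t)))
    with hGdef
  have hreN : ∀ N : ℕ, 1 ≤ N → 0 < ((N:ℂ) * t).re := by
    intro N hN
    have : ((N:ℂ) * t).re = N * t.re := by
      simp [Complex.mul_re]
    rw [this]
    have : (0:ℝ) < N := by exact_mod_cast hN
    positivity
  have hrep : ∀ N : ℕ, chi R ((N:ℂ) * t) = ∑' k : ℤ, G N k := by
    intro N
    rw [chi, ← tsum_mul_left]
  have hsumm : ∀ N : ℕ, 1 ≤ N → Summable (G N) := by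
    intro N hN
    exact summable_chi_term hR (hreN N hN)
  have hcast : ((n:ℂ) + 1) = (((n+1 : ℕ)):ℂ) := by push_cast; ring
  -- per-term bound
  have keybound : ∀ k : ℤ, ‖G n k - G (n+1) k‖
      ≤ B / (c * m * n) * m ^ (k - k0).natAbs := by
    intro k
    set ar : ℝ := c * m ^ k with hardef
    have har0 : 0 < ar := by
      rw [hardef]; positivity
    set a : ℂ := (ar : ℂ) * t with hadef
    have hare : a.re = ar * t.re := by rw [hadef]; exact Complex.re_ofReal_mul _ _
    have hare0 : 0 ≤ a.re := by rw [hare]; positivity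
    have haabs : ‖a‖ = ar * ‖t‖ := by
      rw [hadef, norm_mul, Complex.norm_real, Real.norm_eq_abs, abs_of_pos har0]
    have harg : ∀ N : ℕ, ((mu R : ℂ) - (mu R : ℂ)⁻¹) * (mu R : ℂ) ^ (4 * k) * ((N:ℂ) * t)
        = -((N:ℂ) * a) := by
      intro N
      rw [hpow_eq hR k, hadef, hardef, hc, hm]
      push_cast
      have : (mu R : ℂ) ≠ 0 := by exact_mod_cast hμ0.ne'
      field_simp
      ring
    have hGrep : ∀ N : ℕ, G N k = ((c:ℝ) : ℂ)⁻¹ * ((N:ℂ) * a * Complex.exp (-((N:ℂ) * a))) := by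
      intro N
      have hcne : ((c:ℝ) : ℂ) ≠ 0 := by exact_mod_cast hc0.ne'
      rw [hGdef]
      simp only
      rw [eq_inv_mul_iff_mul_eq₀ hcne, harg N, hpow_eq hR k, hadef, hardef, hm, hc]
      push_cast
      ring
    have hdiff : G n k - G (n+1) k = ((c:ℝ) : ℂ)⁻¹ *
        ((n:ℂ) * a * Complex.exp (-((n:ℂ) * a))
          - ((n:ℂ) + 1) * a * Complex.exp (-(((n:ℂ) + 1) * a))) := by
      rw [hGrep n, hGrep (n+1)]
      push_cast
      ring
    rw [hdiff, norm_mul, norm_inv, Complex.norm_real, Real.norm_eq_abs, abs_of_pos hc0]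
    set r : ℝ := n * ‖a‖ with hrdef
    have hr0 : 0 ≤ r := by rw [hrdef]; positivity
    have hrq : r = q * m ^ k := by
      rw [hrdef, haabs, hardef, hqdef]; ring
    have step1 := key_est a hare0 n hn
    have step2 : Real.exp (-(n * a.re)) ≤ Real.exp (-(δ * r)) := by
      apply Real.exp_le_exp.mpr
      have h1 : δ * ‖a‖ ≤ a.re := by
        rw [hare, haabs]
        calc δ * (ar * ‖t‖) = ar * (δ * ‖t‖) := by ring
          _ ≤ ar * t.re := mul_le_mul_of_nonneg_left (hδt t htK) har0.le
      have : δ * r ≤ n * a.re := by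
        rw [hrdef]
        calc δ * (n * ‖a‖) = n * (δ * ‖a‖) := by ring
          _ ≤ n * a.re := mul_le_mul_of_nonneg_left h1 hn0.le
      linarith
    have step3 : Real.exp (-(δ * r)) * (r + 4 * r ^ 2) ≤ B * min r r⁻¹ := phi_le hδ0 hr0
    have step4 : min r r⁻¹ ≤ m⁻¹ * m ^ (k - k0).natAbs := by
      have hq' : r = (q * m ^ k0) * m ^ (k - k0) := by
        have hsplit : (m:ℝ) ^ k = m ^ k0 * m ^ (k - k0) := by
          rw [← zpow_add₀ hm0.ne']
          congr 1
          ring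
        rw [hrq, hsplit]
        ring
      rw [hq']
      exact min_le_geom hm0 hm1 hk01 hk02 (k - k0)
    have hexp0 : 0 ≤ Real.exp (-(n * a.re)) := Real.exp_nonneg _
    calc c⁻¹ * ‖(n:ℂ) * a * Complex.exp (-((n:ℂ) * a))
          - ((n:ℂ) + 1) * a * Complex.exp (-(((n:ℂ) + 1) * a))‖
        ≤ c⁻¹ * (Real.exp (-(n * a.re)) * (r + 4 * r ^ 2) / n) := by
          apply mul_le_mul_of_nonneg_left _ (by positivity)
          rw [hrdef]
          exact step1
      _ ≤ c⁻¹ * (B * (m⁻¹ * m ^ (k - k0).natAbs) / n) := by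
          apply mul_le_mul_of_nonneg_left _ (by positivity)
          rw [div_le_div_iff_of_pos_right hn0]
          calc Real.exp (-(n * a.re)) * (r + 4 * r ^ 2)
              ≤ Real.exp (-(δ * r)) * (r + 4 * r ^ 2) := by
                apply mul_le_mul_of_nonneg_right step2 (by positivity)
            _ ≤ B * min r r⁻¹ := step3
            _ ≤ B * (m⁻¹ * m ^ (k - k0).natAbs) :=
                mul_le_mul_of_nonneg_left step4 hB0.le
      _ = B / (c * m * n) * m ^ (k - k0).natAbs := by
          field_simp
  -- summability of shifted geometric
  have hgeo : Summable (fun k : ℤ => m ^ (k - k0).natAbs) := by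
    have h := (Equiv.subRight k0).summable_iff.mpr (summable_geom_int hm0.le hm1)
    exact h
  have hgeoB : Summable (fun k : ℤ => B / (c * m * n) * m ^ (k - k0).natAbs) :=
    hgeo.mul_left _
  have habs_sum : Summable (fun k : ℤ => ‖G n k - G (n+1) k‖) := by
    apply Summable.of_nonneg_of_le (fun k => norm_nonneg _) keybound hgeoB
  -- assemble
  have hdiffsum : chi R ((n:ℂ) * t) - chi R (((n:ℂ) + 1) * t)
      = ∑' k : ℤ, (G n k - G (n+1) k) := by
    rw [hcast, hrep n, hrep (n+1), Summable.tsum_sub (hsumm n hn) (hsumm (n+1) (by omega))]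
  rw [hdiffsum]
  have hnorm : ‖∑' k : ℤ, (G n k - G (n+1) k)‖
      ≤ ∑' k : ℤ, ‖G n k - G (n+1) k‖ := by
    have := norm_tsum_le_tsum_norm (f := fun k : ℤ => G n k - G (n+1) k) (by
      simpa using habs_sum)
    simpa using this
  have htsum_le : ∑' k : ℤ, ‖G n k - G (n+1) k‖
      ≤ ∑' k : ℤ, B / (c * m * n) * m ^ (k - k0).natAbs :=
    Summable.tsum_le_tsum keybound habs_sum hgeoB
  have hshift : ∑' k : ℤ, (m ^ (k - k0).natAbs : ℝ) = S := by
    have h := (Equiv.subRight k0).tsum_eq (fun k : ℤ => (m ^ k.natAbs : ℝ))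
    simpa using h
  have hval : ∑' k : ℤ, B / (c * m * n) * m ^ (k - k0).natAbs = B / (c * m * n) * S := by
    rw [tsum_mul_left, hshift]
  have hfinal : B / (c * m * n) * S ≤ (B * S / (c * m) + 1) / n := by
    have h1 : B / (c * m * ↑n) * S = B * S / (c * m) / ↑n := by
      rw [← div_div]
      ring
    rw [h1, div_le_div_iff_of_pos_right hn0]
    linarith
  calc ‖∑' k : ℤ, (G n k - G (n+1) k)‖
      ≤ ∑' k : ℤ, ‖G n k - G (n+1) k‖ := hnorm
    _ ≤ ∑' k : ℤ, B / (c * m * n) * m ^ (k - k0).natAbs := htsum_le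
    _ = B / (c * m * n) * S := hval
    _ ≤ (B * S / (c * m) + 1) / n := hfinal
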